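/- Let Θ be an n×n symmetric matrix that, after permuting rows and columns by community labels c: [n]→[K], has block form with (k,l)-block equal to λ^{(k,l)} (λ^{(l,k)})^T, where λ^{(k,l)} ∈ [0,1]^{n_k} is the vector of popularities λ_{il} for nodes i in community k. If for each k the vectors λ^{(k,1)},…,λ^{(k,K)} are linearly independent, then rank(Θ) = K². -/

import Mathlib

open Matrix

/-- PABM: if for each community `k` the popularity vectors `λ^{(k,1)},…,λ^{(k,K)}`
(restricted to community `k`) are linearly independent, then `rank Θ = K²`. -/
theorem pabm_rank_eq_K_sq (n K : ℕ) (hK : 0 < K)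
    (Λ : Matrix (Fin n) (Fin K) ℝ) (c : Fin n → Fin K)
    (hΛ : ∀ i l, Λ i l ∈ Set.Icc (0 : ℝ) 1)
    (hne : ∀ k : Fin K, ∃ i, c i = k)
    (Θ : Matrix (Fin n) (Fin n) ℝ)
    (hΘ : ∀ i j, Θ i j = Λ i (c j) * Λ j (c i))
    (hind : ∀ k : Fin K,
      LinearIndependent ℝ (fun l : Fin K => fun i : {i : Fin n // c i = k} => Λ i.1 l)) :
    Θ.rank = K ^ 2 := by
  classical
  set M : Matrix (Fin n) (Fin K × Fin K) ℝ :=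
    fun i p => if c i = p.1 then Λ i p.2 else 0 with hMdef
  set N : Matrix (Fin n) (Fin K × Fin K) ℝ :=
    fun i p => if c i = p.2 then Λ i p.1 else 0 with hNdef
  have hfact : Θ = M * Nᵀ := by
    ext i j
    rw [hΘ]
    simp only [mul_apply, transpose_apply]
    simp only [mul_apply, transpose_apply, hMdef, hNdef]
    rw [Fintype.sum_prod_type]
    simp [Finset.sum_ite_eq, ite_mul, mul_ite, mul_zero, zero_mul, mul_comm]
  -- mulVec computations
  have hMvec : ∀ (x : Fin K × Fin K → ℝ) (i : Fin n),
      M.mulVec x i = ∑ l : Fin K, Λ i l * x (c i, l) := by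
    intro x i
    simp only [mulVec, dotProduct, hMdef]
    rw [Fintype.sum_prod_type]
    simp [Finset.sum_ite_eq, ite_mul, zero_mul]
  have hNvec : ∀ (x : Fin K × Fin K → ℝ) (i : Fin n),
      N.mulVec x i = ∑ k : Fin K, Λ i k * x (k, c i) := by
    intro x i
    simp only [mulVec, dotProduct, hNdef]
    rw [Fintype.sum_prod_type]
    rw [Finset.sum_comm]
    simp [Finset.sum_ite_eq, ite_mul, zero_mul]
  -- injectivity of M.mulVecLin
  have hM0 : ∀ x, M.mulVec x = 0 → x = 0 := by
    intro x hx
    funext p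
    obtain ⟨k, l⟩ := p
    refine Fintype.linearIndependent_iff.mp (hind k) (fun l => x (k, l)) ?_ l
    funext i
    have := congrFun hx i.1
    rw [hMvec] at this
    simp only [Pi.zero_apply] at this ⊢
    rw [Finset.sum_apply]
    simp only [Pi.smul_apply, smul_eq_mul]
    rw [← this, i.2]
    exact Finset.sum_congr rfl fun l _ => (mul_comm _ _)
  have hN0 : ∀ x, N.mulVec x = 0 → x = 0 := by
    intro x hx
    funext p
    obtain ⟨k, l⟩ := p
    refine Fintype.linearIndependent_iff.mp (hind l) (fun k => x (k, l)) ?_ k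
    funext i
    have := congrFun hx i.1
    rw [hNvec] at this
    simp only [Pi.zero_apply] at this ⊢
    rw [Finset.sum_apply]
    simp only [Pi.smul_apply, smul_eq_mul]
    rw [← this, i.2]
    exact Finset.sum_congr rfl fun k _ => (mul_comm _ _)
  have hMinj : Function.Injective M.mulVecLin := by
    rw [← LinearMap.ker_eq_bot, LinearMap.ker_eq_bot']
    intro x hx
    exact hM0 x hx
  have hNinj : Function.Injective N.mulVecLin := by
    rw [← LinearMap.ker_eq_bot, LinearMap.ker_eq_bot']
    intro x hx
    exact hN0 x hx
  have hcard : Module.finrank ℝ (Fin K × Fin K → ℝ) = K ^ 2 := by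
    simp [sq]
  have hrankM : M.rank = K ^ 2 := by
    rw [Matrix.rank, LinearMap.finrank_range_of_inj hMinj, hcard]
  have hrankN : N.rank = K ^ 2 := by
    rw [Matrix.rank, LinearMap.finrank_range_of_inj hNinj, hcard]
  have hNT : LinearMap.range (Nᵀ.mulVecLin) = ⊤ := by
    apply Submodule.eq_top_of_finrank_eq
    have h1 : Nᵀ.rank = K ^ 2 := by rw [Matrix.rank_transpose]; exact hrankN
    rw [Matrix.rank] at h1
    rw [h1, hcard]
  rw [hfact, Matrix.rank, Matrix.mulVecLin_mul,
    LinearMap.range_comp_of_range_eq_top _ hNT,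
    ← Matrix.rank, hrankM]
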